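/- arXiv:2303.17172 — 2 statements merged into one kernel-verified Lean document; each statement's English description precedes it below -/
import Mathlib

section
/- Let M be a spanning multiset of points of cardinality n in PG(k-1,q) such that every hyperplane H satisfies M(H) = s. Then every point P satisfies M(P) = t where t = n/[k]_q with [k]_q = (q^k-1)/(q-1); moreover if k ≥ 2 then s = t·[k-1]_q. -/
set_option linter.unusedSectionVars false


open scoped Classical

noncomputable def MVal {F V : Type*} [Field F] [AddCommGroup V] [Module F V]
    (M : Projectivization F V → ℕ) (K : Submodule F V) : ℕ :=
  ∑ᶠ P ∈ {P : Projectivization F V | P.submodule ≤ K}, M P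

def IsDivisible {F V : Type*} [Field F] [AddCommGroup V] [Module F V] (Δ : ℕ)
    (M : Projectivization F V → ℕ) : Prop :=
  ∀ H : Submodule F V, Module.finrank F H + 1 = Module.finrank F V →
    MVal M H ≡ MVal M ⊤ [MOD Δ]

def IsSpanning {F V : Type*} [Field F] [AddCommGroup V] [Module F V]
    (M : Projectivization F V → ℕ) : Prop :=
  (⨆ P ∈ {P : Projectivization F V | 0 < M P}, P.submodule) = ⊤

def gaussNum (q k : ℕ) : ℕ := ∑ i ∈ Finset.range k, q ^ i

def IsProjBase {F V : Type*} [Field F] [AddCommGroup V] [Module F V]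
    (n : ℕ) (B : Finset (Projectivization F V)) : Prop :=
  B.card = n ∧ ∀ T ⊆ B, T.card = n - 1 →
    Module.finrank F ((⨆ P ∈ T, Projectivization.submodule P) : Submodule F V) = n - 1


section Aux

variable {F : Type*} [Field F] [Fintype F] {V : Type*} [AddCommGroup V] [Module F V]
  [Finite V]

private noncomputable local instance fintypeOfFiniteV : Fintype V := Fintype.ofFinite V

noncomputable instance : Fintype (Projectivization F V) :=
  have : Finite (Projectivization F V) := Quotient.finite _
  Fintype.ofFinite _

noncomputable instance : Fintype (Module.Dual F V) :=
  have : Finite (Module.Dual F V) := Finite.of_injective _ LinearMap.coe_injective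
  Fintype.ofFinite _

/-- pts in a subspace -/
noncomputable def ptsIn (K : Submodule F V) : Finset (Projectivization F V) :=
  Finset.univ.filter fun P => P.submodule ≤ K

lemma MVal_eq_sum (M : Projectivization F V → ℕ) (K : Submodule F V) :
    MVal M K = ∑ P ∈ ptsIn K, M P := by
  rw [MVal, show {P : Projectivization F V | P.submodule ≤ K} = ↑(ptsIn (F := F) K) by
    ext P; simp [ptsIn], finsum_mem_coe_finset]

lemma card_submodule (K : Submodule F V) :
    Nat.card K = Fintype.card F ^ Module.finrank F K := by
  have : FiniteDimensional F V := Module.Finite.of_finite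
  rw [Nat.card_eq_fintype_card]
  exact Module.card_eq_pow_finrank


lemma mk_eq_iff_mem {v : V} (hv : v ≠ 0) (P : Projectivization F V) :
    Projectivization.mk F v hv = P ↔ v ∈ P.submodule := by
  constructor
  · rintro rfl
    rw [Projectivization.submodule_mk]
    exact Submodule.mem_span_singleton_self v
  · intro h
    rw [Projectivization.submodule_eq, Submodule.mem_span_singleton] at h
    obtain ⟨a, ha⟩ := h
    rw [← P.mk_rep, Projectivization.mk_eq_mk_iff']
    exact ⟨a, ha⟩

lemma nzcard (K : Submodule F V) :
    Fintype.card {v : V // v ∈ K ∧ v ≠ 0} =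
      Fintype.card F ^ Module.finrank F K - 1 := by
  have : FiniteDimensional F V := Module.Finite.of_finite
  have e : {v : V // v ∈ K ∧ v ≠ 0} ≃ {x : K // ¬ (x = 0)} :=
    { toFun := fun a => ⟨⟨a.1, a.2.1⟩, by
        simp only [Ne, Submodule.mk_eq_zero]
        exact a.2.2⟩
      invFun := fun x => ⟨x.1.1, x.1.2, by
        intro h
        exact x.2 (Subtype.ext h)⟩
      left_inv := fun a => rfl
      right_inv := fun x => rfl }
  rw [Fintype.card_congr e, Fintype.card_subtype_compl, Fintype.card_subtype_eq,
    ← Module.card_eq_pow_finrank (K := F) (V := K)]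

lemma card_ptsIn (K : Submodule F V) :
    (ptsIn (F := F) K).card * (Fintype.card F - 1)
      = Fintype.card F ^ Module.finrank F K - 1 := by
  classical
  have : FiniteDimensional F V := Module.Finite.of_finite
  rw [← nzcard K]
  conv_rhs => rw [Fintype.card]
  rw [Finset.card_eq_sum_card_fiberwise
    (f := fun a : {v : V // v ∈ K ∧ v ≠ 0} => Projectivization.mk F a.1 a.2.2)
    (t := Finset.univ) (fun a _ => Finset.mem_univ _)]
  have hfib : ∀ P : Projectivization F V,
      (Finset.univ.filter
        (fun a : {v : V // v ∈ K ∧ v ≠ 0} => Projectivization.mk F a.1 a.2.2 = P)).card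
      = if P ∈ ptsIn (F := F) K then Fintype.card F - 1 else 0 := by
    intro P
    rw [← Fintype.card_subtype]
    split_ifs with hP
    · have hPK : P.submodule ≤ K := by simpa [ptsIn] using hP
      have e : {a : {v : V // v ∈ K ∧ v ≠ 0} // Projectivization.mk F a.1 a.2.2 = P}
          ≃ {v : V // v ∈ P.submodule ∧ v ≠ 0} :=
        { toFun := fun a => ⟨a.1.1, (mk_eq_iff_mem a.1.2.2 P).1 a.2, a.1.2.2⟩
          invFun := fun v => ⟨⟨v.1, hPK v.2.1, v.2.2⟩, (mk_eq_iff_mem v.2.2 P).2 v.2.1⟩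
          left_inv := fun a => rfl
          right_inv := fun v => rfl }
      rw [Fintype.card_congr e, nzcard, Projectivization.finrank_submodule, pow_one]
    · rw [Fintype.card_eq_zero_iff]
      constructor
      rintro ⟨a, ha⟩
      apply hP
      simp only [ptsIn, Finset.mem_filter, Finset.mem_univ, true_and]
      rw [← ha, Projectivization.submodule_mk]
      exact (Submodule.span_singleton_le_iff_mem _ _).2 a.2.1
  rw [Finset.sum_congr rfl (fun P _ => hfib P), Finset.sum_ite_mem,
    Finset.univ_inter, Finset.sum_const, smul_eq_mul]


lemma card_ann (W : Submodule F V) :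
    (Finset.univ.filter fun φ : Module.Dual F V => W ≤ LinearMap.ker φ).card
      = Fintype.card F ^ (Module.finrank F V - Module.finrank F W) := by
  classical
  have : FiniteDimensional F V := Module.Finite.of_finite
  rw [← Fintype.card_subtype]
  have e : {φ : Module.Dual F V // W ≤ LinearMap.ker φ} ≃ W.dualAnnihilator :=
    (Equiv.refl _).subtypeEquiv fun φ => by
      rw [Submodule.mem_dualAnnihilator]
      constructor
      · intro h w hw; exact h hw
      · intro h w hw; exact h w hw
  rw [Fintype.card_congr e, ← Nat.card_eq_fintype_card,
    card_submodule (F := F) W.dualAnnihilator,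
    ← (Subspace.quotEquivAnnihilator W).finrank_eq]
  congr 1
  have := Submodule.finrank_quotient_add_finrank W
  omega

lemma finrank_ker_of_ne {φ : Module.Dual F V} (hφ : φ ≠ 0) :
    Module.finrank F (LinearMap.ker φ) + 1 = Module.finrank F V := by
  have : FiniteDimensional F V := Module.Finite.of_finite
  have h := LinearMap.finrank_range_add_finrank_ker φ
  have hr : Module.finrank F (LinearMap.range φ) = 1 := by
    have h1 : LinearMap.range φ ≠ ⊥ := fun hc => hφ (LinearMap.range_eq_bot.mp hc)
    have h2 : Module.finrank F (LinearMap.range φ) ≤ 1 := by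
      simpa using Submodule.finrank_le (LinearMap.range φ)
    have h3 : Module.finrank F (LinearMap.range φ) ≠ 0 :=
      fun hc => h1 (Submodule.finrank_eq_zero.mp hc)
    omega
  omega

lemma finrank_sup_of_ne {P Q : Projectivization F V} (h : P ≠ Q) :
    Module.finrank F (P.submodule ⊔ Q.submodule : Submodule F V) = 2 := by
  have : FiniteDimensional F V := Module.Finite.of_finite
  have h1 := P.finrank_submodule
  have h2 := Q.finrank_submodule
  have hne : P.submodule ≠ Q.submodule := fun hc => h (Projectivization.submodule_injective hc)
  have hinf : P.submodule ⊓ Q.submodule = ⊥ := by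
    by_contra hbot
    have hfr : Module.finrank F (P.submodule ⊓ Q.submodule : Submodule F V) ≠ 0 :=
      fun hc => hbot (Submodule.finrank_eq_zero.mp hc)
    have hle1 : Module.finrank F (P.submodule ⊓ Q.submodule : Submodule F V) ≤ 1 := by
      simpa [h1] using Submodule.finrank_mono (inf_le_left :
        P.submodule ⊓ Q.submodule ≤ P.submodule)
    have heq1 : P.submodule ⊓ Q.submodule = P.submodule :=
      Submodule.eq_of_le_of_finrank_le inf_le_left (by omega)
    have heq2 : P.submodule ⊓ Q.submodule = Q.submodule :=
      Submodule.eq_of_le_of_finrank_le inf_le_right (by rw [h2]; omega)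
    exact hne (heq1 ▸ heq2)
  have := Submodule.finrank_sup_add_finrank_inf_eq P.submodule Q.submodule
  rw [hinf, h1, h2, finrank_bot] at this
  omega


lemma point_eq (M : Projectivization F V → ℕ) (s : ℕ)
    (hH : ∀ H : Submodule F V, Module.finrank F H + 1 = Module.finrank F V → MVal M H = s)
    (P₀ : Projectivization F V) :
    M P₀ * (Fintype.card F ^ (Module.finrank F V - 1) - 1)
      + (∑ Q ∈ Finset.univ.erase P₀, M Q) * (Fintype.card F ^ (Module.finrank F V - 2) - 1)
      = s * (Fintype.card F ^ (Module.finrank F V - 1) - 1) := by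
  classical
  have : FiniteDimensional F V := Module.Finite.of_finite
  set q := Fintype.card F with hq
  set k := Module.finrank F V with hk
  set W₀ := P₀.submodule with hW₀
  set D : Finset (Module.Dual F V) :=
    Finset.univ.filter (fun φ => φ ≠ 0 ∧ W₀ ≤ LinearMap.ker φ) with hD
  have hcount : ∀ W : Submodule F V,
      (Finset.univ.filter fun φ : Module.Dual F V => φ ≠ 0 ∧ W ≤ LinearMap.ker φ).card
        = q ^ (k - Module.finrank F W) - 1 := by
    intro W
    have hkerzero : (0 : Module.Dual F V) ∈
        Finset.univ.filter (fun φ : Module.Dual F V => W ≤ LinearMap.ker φ) := by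
      simp [LinearMap.ker_zero]
    have he : Finset.univ.filter (fun φ : Module.Dual F V => φ ≠ 0 ∧ W ≤ LinearMap.ker φ)
        = (Finset.univ.filter (fun φ : Module.Dual F V => W ≤ LinearMap.ker φ)).erase 0 := by
      ext φ
      simp only [Finset.mem_filter, Finset.mem_erase, Finset.mem_univ, true_and, and_comm]
    rw [he, Finset.card_erase_of_mem hkerzero, card_ann]
  have hDcard : D.card = q ^ (k - 1) - 1 := by
    rw [hD, hcount W₀]
    rw [hW₀, Projectivization.finrank_submodule]
  have hstep1 : ∑ φ ∈ D, (∑ P ∈ ptsIn (F := F) (LinearMap.ker φ), M P) = D.card * s := by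
    have h0 : ∀ φ ∈ D, (∑ P ∈ ptsIn (F := F) (LinearMap.ker φ), M P) = s := by
      intro φ hφ
      rw [hD, Finset.mem_filter] at hφ
      rw [← MVal_eq_sum]
      exact hH _ (finrank_ker_of_ne hφ.2.1)
    rw [Finset.sum_congr rfl h0, Finset.sum_const, smul_eq_mul]
  have hswap : ∑ φ ∈ D, (∑ P ∈ ptsIn (F := F) (LinearMap.ker φ), M P)
      = ∑ P : Projectivization F V,
          (q ^ (k - Module.finrank F (W₀ ⊔ P.submodule : Submodule F V)) - 1) * M P := by
    have h1 : ∀ φ ∈ D, (∑ P ∈ ptsIn (F := F) (LinearMap.ker φ), M P)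
        = ∑ P : Projectivization F V, if P.submodule ≤ LinearMap.ker φ then M P else 0 := by
      intro φ _; rw [ptsIn, Finset.sum_filter]
    rw [Finset.sum_congr rfl h1, Finset.sum_comm]
    refine Finset.sum_congr rfl fun P _ => ?_
    rw [← Finset.sum_filter, Finset.sum_const, smul_eq_mul]
    congr 1
    have h2 : D.filter (fun φ => P.submodule ≤ LinearMap.ker φ)
        = Finset.univ.filter
            (fun φ : Module.Dual F V => φ ≠ 0 ∧ (W₀ ⊔ P.submodule) ≤ LinearMap.ker φ) := by
      ext φ
      simp only [hD, Finset.mem_filter, Finset.filter_filter, Finset.mem_univ, true_and,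
        sup_le_iff]
      tauto
    rw [h2, hcount]
  have hsplit : ∑ P : Projectivization F V,
      (q ^ (k - Module.finrank F (W₀ ⊔ P.submodule : Submodule F V)) - 1) * M P
      = (q ^ (k - 1) - 1) * M P₀
        + ∑ P ∈ Finset.univ.erase P₀, (q ^ (k - 2) - 1) * M P := by
    rw [← Finset.add_sum_erase _ _ (Finset.mem_univ P₀)]
    congr 1
    · rw [hW₀, sup_idem, Projectivization.finrank_submodule]
    · refine Finset.sum_congr rfl fun P hP => ?_
      rw [hW₀, finrank_sup_of_ne (fun hc => (Finset.mem_erase.mp hP).1 hc.symm)]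
  rw [hstep1, hDcard] at hswap
  rw [hsplit, ← Finset.mul_sum] at hswap
  linarith [hswap]

end Aux

lemma gauss_mul (r k : ℕ) : gaussNum (r + 1) k * r + 1 = (r + 1) ^ k := by
  induction k with
  | zero => simp [gaussNum]
  | succ k ih =>
    rw [gaussNum, Finset.sum_range_succ, ← gaussNum, pow_succ]
    nlinarith [ih]

lemma ptsIn_card_gauss {F : Type*} [Field F] [Fintype F] {V : Type*} [AddCommGroup V]
    [Module F V] [Finite V] (K : Submodule F V) :
    (ptsIn (F := F) K).card = gaussNum (Fintype.card F) (Module.finrank F K) := by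
  have hq2 : 2 ≤ Fintype.card F := Fintype.one_lt_card
  obtain ⟨r, hr⟩ : ∃ r, Fintype.card F = r + 1 := ⟨Fintype.card F - 1, by omega⟩
  have hr1 : 1 ≤ r := by omega
  have h3 := card_ptsIn (F := F) K
  rw [hr] at h3 ⊢
  have h4 := gauss_mul r (Module.finrank F K)
  have h5 : gaussNum (r + 1) (Module.finrank F K) * r = (r + 1) ^ Module.finrank F K - 1 :=
    Nat.eq_sub_of_add_eq h4
  have h6 : r + 1 - 1 = r := by omega
  rw [h6] at h3
  exact Nat.eq_of_mul_eq_mul_right (by omega) (h3.trans h5.symm)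


theorem stmt_1 {F : Type*} [Field F] [Fintype F] (q k n s : ℕ)
    (hq : Fintype.card F = q)
    (M : Projectivization F (Fin k → F) → ℕ)
    (hspan : IsSpanning M) (hn : MVal M ⊤ = n)
    (hH : ∀ H : Submodule F (Fin k → F), Module.finrank F H + 1 = k → MVal M H = s) :
    ∃ t : ℕ, n = t * gaussNum q k ∧ (∀ P, M P = t) ∧
      (2 ≤ k → s = t * gaussNum q (k - 1)) := by
  classical
  subst hq
  have hq2 : 2 ≤ Fintype.card F := Fintype.one_lt_card
  have hfrV : Module.finrank F (Fin k → F) = k := Module.finrank_fin_fun F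
  rcases Nat.eq_zero_or_pos k with rfl | hk1
  · haveI : IsEmpty (Projectivization F (Fin 0 → F)) :=
      ⟨fun P => P.rep_nonzero (Subsingleton.elim _ _)⟩
    refine ⟨0, ?_, fun P => (IsEmpty.false P).elim, fun h => absurd h (by omega)⟩
    rw [← hn, MVal_eq_sum]
    simp [gaussNum]
  have hnsum : n = ∑ P : Projectivization F (Fin k → F), M P := by
    rw [← hn, MVal_eq_sum]
    congr 1
    exact Finset.filter_true_of_mem fun P _ => le_top
  have hv : (fun _ => 1 : Fin k → F) ≠ 0 := by
    intro h
    have h0 := congrFun h ⟨0, hk1⟩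
    simp at h0
  set P₀ := Projectivization.mk F _ hv with hP₀
  by_cases hk2 : 2 ≤ k
  · -- main case
    have hHH : ∀ H : Submodule F (Fin k → F),
        Module.finrank F H + 1 = Module.finrank F (Fin k → F) → MVal M H = s := by
      intro H h
      exact hH H (h.trans hfrV)
    have hkey : ∀ P Q : Projectivization F (Fin k → F), M P = M Q := by
      intro P Q
      have e1 := point_eq M s hHH P
      have e2 := point_eq M s hHH Q
      rw [hfrV] at e1 e2
      have hP : M P + ∑ R ∈ Finset.univ.erase P, M R = n := by
        rw [hnsum]; exact Finset.add_sum_erase _ _ (Finset.mem_univ P)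
      have hQ : M Q + ∑ R ∈ Finset.univ.erase Q, M R = n := by
        rw [hnsum]; exact Finset.add_sum_erase _ _ (Finset.mem_univ Q)
      have h1 : 1 ≤ Fintype.card F ^ (k - 1) := Nat.one_le_pow _ _ (by omega)
      have h2 : 1 ≤ Fintype.card F ^ (k - 2) := Nat.one_le_pow _ _ (by omega)
      have hlt : Fintype.card F ^ (k - 2) < Fintype.card F ^ (k - 1) :=
        Nat.pow_lt_pow_right (by omega) (by omega)
      zify [h1, h2] at e1 e2
      have hP' := congrArg (Nat.cast : ℕ → ℤ) hP
      have hQ' := congrArg (Nat.cast : ℕ → ℤ) hQ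
      push_cast at hP' hQ' e1 e2
      have key0 : ((M P : ℤ) - M Q) *
          ((Fintype.card F : ℤ) ^ (k - 1) - (Fintype.card F : ℤ) ^ (k - 2)) = 0 := by
        linear_combination e1 - e2 - ((Fintype.card F : ℤ) ^ (k - 2) - 1) * hP'
          + ((Fintype.card F : ℤ) ^ (k - 2) - 1) * hQ'
      have hxy : ((Fintype.card F : ℤ) ^ (k - 1) - (Fintype.card F : ℤ) ^ (k - 2)) ≠ 0 := by
        have hlt' : ((Fintype.card F : ℤ) ^ (k - 2)) < ((Fintype.card F : ℤ) ^ (k - 1)) := by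
          exact_mod_cast hlt
        exact sub_ne_zero.mpr (ne_of_gt hlt')
      have := (mul_eq_zero.mp key0).resolve_right hxy
      exact_mod_cast sub_eq_zero.mp this
    refine ⟨M P₀, ?_, fun P => hkey P P₀, fun _ => ?_⟩
    · -- n = M P₀ * gaussNum q k
      rw [hnsum, Finset.sum_congr rfl (fun P _ => hkey P P₀), Finset.sum_const,
        Finset.card_univ, smul_eq_mul, mul_comm]
      congr 1
      have h7 : Fintype.card (Projectivization F (Fin k → F)) = (ptsIn (F := F)
          (⊤ : Submodule F (Fin k → F))).card := by
        rw [ptsIn, Finset.filter_true_of_mem fun P _ => le_top, Finset.card_univ]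
      rw [h7, ptsIn_card_gauss, finrank_top, hfrV]
    · -- s = M P₀ * gaussNum q (k-1)
      set i : Fin k := ⟨0, by omega⟩ with hi
      set φ : (Fin k → F) →ₗ[F] F := LinearMap.proj i with hφdef
      have hφ : φ ≠ 0 := by
        intro h
        have h1 : φ (Pi.single i 1) = 1 := by simp [hφdef]
        rw [h] at h1
        simp at h1
      have hker := finrank_ker_of_ne (F := F) hφ
      rw [hfrV] at hker
      have hs := hH (LinearMap.ker φ) hker
      rw [MVal_eq_sum] at hs
      rw [← hs, Finset.sum_congr rfl (fun P _ => hkey P P₀), Finset.sum_const, smul_eq_mul,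
        mul_comm]
      congr 1
      rw [ptsIn_card_gauss]
      congr 1
      omega
  · -- k = 1
    have hk1e : k = 1 := by omega
    subst hk1e
    have huniq : ∀ P : Projectivization F (Fin 1 → F), P = P₀ := by
      intro P
      apply Projectivization.submodule_injective
      have h1 : P.submodule = ⊤ := Submodule.eq_top_of_finrank_eq (by
        rw [Projectivization.finrank_submodule, hfrV])
      have h2 : P₀.submodule = ⊤ := Submodule.eq_top_of_finrank_eq (by
        rw [Projectivization.finrank_submodule, hfrV])
      rw [h1, h2]
    have hcard1 : Fintype.card (Projectivization F (Fin 1 → F)) = 1 :=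
      Fintype.card_eq_one_iff.mpr ⟨P₀, huniq⟩
    refine ⟨M P₀, ?_, fun P => by rw [huniq P], fun h => absurd h (by omega)⟩
    have hg1 : gaussNum (Fintype.card F) 1 = 1 := by simp [gaussNum]
    rw [hg1, mul_one, hnsum, Finset.sum_congr rfl (fun P _ => congrArg M (huniq P)),
      Finset.sum_const, Finset.card_univ, hcard1, one_smul]
end

section
/- Let M be a spanning multiset of points in PG(k-1,q) of cardinality n, let 1 ≤ l ≤ k-2, and let K be an l-dimensional subspace. If every hyperplane containing K has multiplicity at least s, then M(K) ≥ s - (n-s)/(q-1) + (n-s)/(q^{k-l-1}(q-1)). -/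
open scoped Classical

open scoped LinearAlgebra.Projectivization

lemma gauss_mul_s3 (q d : ℕ) (hq : 1 ≤ q) : gaussNum q d * (q - 1) + 1 = q ^ d := by
  induction d with
  | zero => simp [gaussNum]
  | succ d ih =>
      have : gaussNum q (d+1) = gaussNum q d + q ^ d := by
        simp [gaussNum, Finset.sum_range_succ]
      rw [this, add_mul, add_right_comm, ih, pow_succ]
      have : q ^ d * (q-1) + q ^ d = q ^ d * q := by
        rw [← Nat.mul_succ]; congr 1; omega
      omega

lemma card_ne_zero' {V : Type*} [AddCommGroup V] [Fintype V] :
    Fintype.card {v : V // v ≠ 0} = Fintype.card V - 1 := by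
  have h := Fintype.card_subtype_compl (fun v : V => v = 0)
  rw [Fintype.card_subtype_eq (0 : V)] at h
  calc Fintype.card {v : V // v ≠ 0} = Fintype.card {v : V // ¬ v = 0} :=
        Fintype.card_congr (Equiv.refl _)
  _ = Fintype.card V - 1 := h

lemma rep_mem_submodule {F V : Type*} [Field F] [AddCommGroup V] [Module F V]
    (P : ℙ F V) : P.rep ∈ P.submodule := by
  rw [Projectivization.submodule_eq]
  exact Submodule.mem_span_singleton_self P.rep

lemma card_proj_mul {F V : Type*} [Field F] [Fintype F] [AddCommGroup V] [Module F V]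
    [Fintype V] [Fintype (ℙ F V)] :
    Fintype.card (ℙ F V) * (Fintype.card F - 1) = Fintype.card V - 1 := by
  classical
  have h1 : Fintype.card {v : V // v ≠ 0} = Fintype.card V - 1 := card_ne_zero'
  have h2 : Fintype.card {v : V // v ≠ 0}
      = ∑ P : ℙ F V, Fintype.card {v : {w : V // w ≠ 0} // Projectivization.mk' F v = P} := by
    rw [← Fintype.card_sigma]
    exact Fintype.card_congr (Equiv.sigmaFiberEquiv _).symm
  have h3 : ∀ P : ℙ F V,
      Fintype.card {v : {w : V // w ≠ 0} // Projectivization.mk' F v = P}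
        = Fintype.card F - 1 := by
    intro P
    rw [← card_ne_zero' (V := F)]
    refine (Fintype.card_congr ?_).symm
    refine Equiv.ofBijective (fun a => ⟨⟨a.1 • P.rep, smul_ne_zero a.2 P.rep_nonzero⟩, ?_⟩)
      ⟨?_, ?_⟩
    · simp only [Projectivization.mk'_eq_mk]
      conv_rhs => rw [← P.mk_rep]
      exact (Projectivization.mk_eq_mk_iff' F _ _ _ P.rep_nonzero).2 ⟨a.1, rfl⟩
    · intro a b hab
      have : (a : F) • P.rep = (b : F) • P.rep := by
        simpa using congrArg (fun x => (x.1 : V)) hab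
      exact Subtype.ext (smul_left_injective F P.rep_nonzero this)
    · rintro ⟨⟨v, hv⟩, hP⟩
      simp only [Projectivization.mk'_eq_mk] at hP
      have : Projectivization.mk F v hv = Projectivization.mk F P.rep P.rep_nonzero := by
        rw [hP, P.mk_rep]
      obtain ⟨a, ha⟩ := (Projectivization.mk_eq_mk_iff' F _ _ hv P.rep_nonzero).1 this
      have ha0 : a ≠ 0 := by
        rintro rfl
        rw [zero_smul] at ha
        exact hv ha.symm
      exact ⟨⟨a, ha0⟩, Subtype.ext (Subtype.ext ha)⟩
  rw [h2] at h1
  simp only [h3, Finset.sum_const, Finset.card_univ, smul_eq_mul] at h1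
  exact h1

lemma card_proj_eq {F V : Type*} [Field F] [Fintype F] [AddCommGroup V] [Module F V]
    [Fintype V] [Fintype (ℙ F V)] :
    Fintype.card (ℙ F V) = gaussNum (Fintype.card F) (Module.finrank F V) := by
  have hq : 2 ≤ Fintype.card F := Fintype.one_lt_card
  have h1 := card_proj_mul (F := F) (V := V)
  have h2 : Fintype.card V = Fintype.card F ^ Module.finrank F V := Module.card_eq_pow_finrank
  have h3 := gauss_mul_s3 (Fintype.card F) (Module.finrank F V) (by omega)
  have hpos : 1 ≤ Fintype.card V := Fintype.card_pos
  have : Fintype.card (ℙ F V) * (Fintype.card F - 1)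
      = gaussNum (Fintype.card F) (Module.finrank F V) * (Fintype.card F - 1) := by omega
  exact Nat.eq_of_mul_eq_mul_right (by omega) this

lemma proj_sub_equiv {F V : Type*} [Field F] [AddCommGroup V] [Module F V]
    (W : Submodule F V) :
    Nonempty (ℙ F W ≃ {P : ℙ F V // P.submodule ≤ W}) := by
  refine ⟨Equiv.ofBijective
    (fun Q => ⟨Projectivization.map W.subtype W.injective_subtype Q, ?_⟩) ⟨?_, ?_⟩⟩
  · induction Q using Projectivization.ind with
    | h v hv =>
      rw [Projectivization.map_mk, Projectivization.submodule_mk]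
      rw [Submodule.span_singleton_le_iff_mem]
      exact v.2
  · intro a b hab
    have := congrArg (fun x => x.1) hab
    exact Projectivization.map_injective W.subtype W.injective_subtype this
  · rintro ⟨P, hP⟩
    have hmem : P.rep ∈ W := hP (rep_mem_submodule P)
    have hne : (⟨P.rep, hmem⟩ : W) ≠ 0 := by
      intro h
      exact P.rep_nonzero (congrArg Subtype.val h)
    refine ⟨Projectivization.mk F (⟨P.rep, hmem⟩ : W) hne, ?_⟩
    apply Subtype.ext
    simp only [Projectivization.map_mk]
    exact P.mk_rep

lemma functional_ker_finrank {F U : Type*} [Field F] [AddCommGroup U] [Module F U]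
    [FiniteDimensional F U] (g : U →ₗ[F] F) (x : U) (hx : g x ≠ 0) :
    Module.finrank F (LinearMap.ker g) + 1 = Module.finrank F U := by
  have hr : LinearMap.range g = ⊤ := by
    rw [eq_top_iff]
    rintro c -
    refine ⟨(c * (g x)⁻¹) • x, ?_⟩
    rw [map_smul, smul_eq_mul, mul_assoc, inv_mul_cancel₀ hx, mul_one]
  have h := LinearMap.finrank_range_add_finrank_ker g
  rw [hr, finrank_top, Module.finrank_self] at h
  omega

lemma MVal_eq_sum_s3 {F V : Type*} [Field F] [AddCommGroup V] [Module F V]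
    [Fintype (ℙ F V)] (M : ℙ F V → ℕ) (W : Submodule F V) :
    MVal M W = ∑ P : ℙ F V, if P.submodule ≤ W then M P else 0 := by
  rw [MVal, finsum_mem_def, finsum_eq_sum_of_fintype]
  exact Finset.sum_congr rfl fun P _ => by
    simp [Set.indicator_apply, Set.mem_setOf_eq]


set_option maxHeartbeats 2000000 in
theorem stmt_3 {F : Type*} [Field F] [Fintype F] (q k l n s : ℕ)
    (hq : Fintype.card F = q)
    (M : Projectivization F (Fin k → F) → ℕ)
    (hspan : IsSpanning M) (hn : MVal M ⊤ = n)
    (hl1 : 1 ≤ l) (hl2 : l ≤ k - 2)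
    (K : Submodule F (Fin k → F)) (hK : Module.finrank F K = l)
    (hs : ∀ H : Submodule F (Fin k → F), Module.finrank F H + 1 = k → K ≤ H → s ≤ MVal M H) :
    (s : ℚ) - ((n : ℚ) - s) / ((q : ℚ) - 1)
      + ((n : ℚ) - s) / ((q : ℚ) ^ (k - l - 1) * ((q : ℚ) - 1)) ≤ (MVal M K : ℚ) := by
  classical
  have hq2 : 2 ≤ q := hq ▸ Fintype.one_lt_card
  set V := Fin k → F with hV
  have hkV : Module.finrank F V = k := Module.finrank_fin_fun F
  have hlk : l + 2 ≤ k := by omega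
  set m := k - l - 1 with hm
  set Q := V ⧸ K with hQ
  set D := Module.Dual F Q with hD
  haveI : Finite Q := Finite.of_surjective K.mkQ (Submodule.mkQ_surjective K)
  haveI : Fintype Q := Fintype.ofFinite _
  haveI : Finite D := Finite.of_injective (fun f => (f : Q → F)) DFunLike.coe_injective
  haveI : Fintype D := Fintype.ofFinite _
  haveI finPV : Finite (ℙ F V) := Quotient.finite _
  haveI : Fintype (ℙ F V) := Fintype.ofFinite _
  haveI finPD : Finite (ℙ F D) := Quotient.finite _
  haveI : Fintype (ℙ F D) := Fintype.ofFinite _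
  have hQr : Module.finrank F Q = k - l := by
    have h : Module.finrank F Q + Module.finrank F K = Module.finrank F V :=
      Submodule.finrank_quotient_add_finrank K
    rw [hK, hkV] at h
    omega
  have hDr : Module.finrank F D = k - l := by
    have h : Module.finrank F D = Module.finrank F Q := Subspace.dual_finrank_eq
    rw [h, hQr]
  -- hyperplane associated to a point of the dual projective space
  set Hmap : ℙ F D → Submodule F V := fun ξ => LinearMap.ker (ξ.rep ∘ₗ K.mkQ) with hHmap
  have hg : ∀ ξ : ℙ F D, ∃ x : V, ξ.rep (K.mkQ x) ≠ 0 := by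
    intro ξ
    by_contra h
    push_neg at h
    apply ξ.rep_nonzero
    refine LinearMap.ext fun y => ?_
    obtain ⟨x, rfl⟩ := Submodule.mkQ_surjective K y
    simpa using h x
  have hHrank : ∀ ξ : ℙ F D, Module.finrank F (Hmap ξ) + 1 = k := by
    intro ξ
    obtain ⟨x, hx⟩ := hg ξ
    have := functional_ker_finrank (ξ.rep ∘ₗ K.mkQ) x hx
    rwa [hkV] at this
  have hHK : ∀ ξ : ℙ F D, K ≤ Hmap ξ := by
    intro ξ x hx
    have h0 : K.mkQ x = 0 := by
      rw [Submodule.mkQ_apply, Submodule.Quotient.mk_eq_zero]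
      exact hx
    simp only [hHmap, LinearMap.mem_ker, LinearMap.comp_apply, h0, map_zero]
  have hmemiff : ∀ (P : ℙ F V) (ξ : ℙ F D),
      P.submodule ≤ Hmap ξ ↔ ξ.rep (K.mkQ P.rep) = 0 := by
    intro P ξ
    rw [Projectivization.submodule_eq, Submodule.span_singleton_le_iff_mem]
    exact Iff.rfl
  -- counting
  have hcount : ∀ P : ℙ F V,
      (Finset.univ.filter fun ξ : ℙ F D => P.submodule ≤ Hmap ξ).card
        = if P.submodule ≤ K then gaussNum q (k - l) else gaussNum q m := by
    intro P
    by_cases hPK : P.submodule ≤ K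
    · rw [if_pos hPK]
      have x0 : K.mkQ P.rep = 0 := by
        rw [Submodule.mkQ_apply, Submodule.Quotient.mk_eq_zero]
        exact hPK (rep_mem_submodule P)
      have : ∀ ξ : ℙ F D, P.submodule ≤ Hmap ξ := by
        intro ξ
        rw [hmemiff, x0, map_zero]
      rw [Finset.filter_true_of_mem (fun ξ _ => this ξ), Finset.card_univ, card_proj_eq, hq,
        hDr]
    · rw [if_neg hPK]
      set x : Q := K.mkQ P.rep with hxdef
      have hx : x ≠ 0 := by
        intro h0
        apply hPK
        rw [Projectivization.submodule_eq, Submodule.span_singleton_le_iff_mem]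
        rw [hxdef, Submodule.mkQ_apply, Submodule.Quotient.mk_eq_zero] at h0
        exact h0
      set W' : Submodule F D := LinearMap.ker (Module.Dual.eval F Q x) with hW'
      have hcond : ∀ ξ : ℙ F D, (P.submodule ≤ Hmap ξ) ↔ ξ.submodule ≤ W' := by
        intro ξ
        rw [hmemiff, Projectivization.submodule_eq, Submodule.span_singleton_le_iff_mem,
          hW', LinearMap.mem_ker]
        simp [Module.Dual.eval, hxdef, Submodule.mkQ_apply]
      have hW'rank : Module.finrank F W' = m := by
        obtain ⟨φ, hφ⟩ : ∃ φ : D, φ x ≠ 0 := by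
          by_contra h
          push_neg at h
          exact hx ((Module.forall_dual_apply_eq_zero_iff F x).1 h)
        have h5 : Module.finrank F W' + 1 = Module.finrank F D := by
          have := functional_ker_finrank (Module.Dual.eval F Q x) φ
            (by simpa [Module.Dual.eval] using hφ)
          rw [hW']
          exact this
        rw [hDr] at h5
        omega
      haveI : Finite (ℙ F W') := Quotient.finite _
      haveI : Fintype (ℙ F W') := Fintype.ofFinite _
      calc (Finset.univ.filter fun ξ : ℙ F D => P.submodule ≤ Hmap ξ).card
          = Fintype.card {ξ : ℙ F D // P.submodule ≤ Hmap ξ} := (Fintype.card_subtype _).symm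
        _ = Fintype.card {ξ : ℙ F D // ξ.submodule ≤ W'} :=
            Fintype.card_congr (Equiv.subtypeEquivRight hcond)
        _ = Fintype.card (ℙ F W') := (Fintype.card_congr (proj_sub_equiv W').some).symm
        _ = gaussNum q m := by rw [card_proj_eq, hq, hW'rank]
  -- the double count
  set a := MVal M K with ha
  set b := ∑ P : ℙ F V, if P.submodule ≤ K then 0 else M P with hb
  have hab : a + b = n := by
    rw [ha, MVal_eq_sum_s3, hb, ← Finset.sum_add_distrib, ← hn, MVal_eq_sum_s3]
    exact Finset.sum_congr rfl fun P _ => by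
      by_cases h : P.submodule ≤ K <;> simp [h]
  set A := gaussNum q (k - l) with hA
  set B := gaussNum q m with hB
  have hcardS : Fintype.card (ℙ F D) = A := by rw [card_proj_eq, hq, hDr]
  have hsum : A * s ≤ A * a + B * b := by
    calc A * s = ∑ _ξ : ℙ F D, s := by
          rw [Finset.sum_const, Finset.card_univ, hcardS, smul_eq_mul]
      _ ≤ ∑ ξ : ℙ F D, MVal M (Hmap ξ) :=
          Finset.sum_le_sum fun ξ _ => hs (Hmap ξ) (hHrank ξ) (hHK ξ)
      _ = ∑ ξ : ℙ F D, ∑ P : ℙ F V, if P.submodule ≤ Hmap ξ then M P else 0 := by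
          exact Finset.sum_congr rfl fun ξ _ => MVal_eq_sum_s3 M _
      _ = ∑ P : ℙ F V, ∑ ξ : ℙ F D, if P.submodule ≤ Hmap ξ then M P else 0 :=
          Finset.sum_comm
      _ = ∑ P : ℙ F V, (Finset.univ.filter fun ξ : ℙ F D => P.submodule ≤ Hmap ξ).card * M P := by
          refine Finset.sum_congr rfl fun P _ => ?_
          rw [← Finset.sum_filter, Finset.sum_const, smul_eq_mul]
      _ = ∑ P : ℙ F V, (if P.submodule ≤ K then A else B) * M P := by
          refine Finset.sum_congr rfl fun P _ => ?_
          rw [hcount]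
      _ = A * a + B * b := by
          rw [ha, MVal_eq_sum_s3, hb, Finset.mul_sum, Finset.mul_sum, ← Finset.sum_add_distrib]
          refine Finset.sum_congr rfl fun P _ => ?_
          by_cases h : P.submodule ≤ K <;> simp [h]
  have hABn : A = B + q ^ m := by
    have hkl : k - l = m + 1 := by omega
    rw [hA, hB, hkl, gaussNum, gaussNum, Finset.sum_range_succ]
  have hgB : B * (q - 1) + 1 = q ^ m := gauss_mul_s3 q m (by omega)
  -- rational arithmetic
  have hq1 : (1 : ℚ) < (q : ℚ) := by exact_mod_cast hq2
  have hqm : (0 : ℚ) < (q : ℚ) ^ m := by positivity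
  have key : (A : ℚ) * s ≤ A * a + B * b := by exact_mod_cast hsum
  have hbq : (b : ℚ) = n - a := by
    have : (a : ℚ) + b = n := by exact_mod_cast hab
    linarith
  have hABq : (A : ℚ) = B + (q : ℚ) ^ m := by exact_mod_cast hABn
  have hBq : (B : ℚ) * ((q : ℚ) - 1) = (q : ℚ) ^ m - 1 := by
    have h1 : (B * (q - 1) + 1 : ℕ) = ((q : ℕ) ^ m : ℕ) := hgB
    have h2 : ((q - 1 : ℕ) : ℚ) = (q : ℚ) - 1 := by
      rw [Nat.cast_sub (by omega)]; simp
    have := congrArg (fun t : ℕ => (t : ℚ)) h1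
    push_cast at this
    rw [h2] at this
    linarith
  have k1 : (A : ℚ) * s - B * n ≤ (q : ℚ) ^ m * a := by
    rw [hbq, hABq] at key
    nlinarith [key]
  rw [← mul_le_mul_iff_left₀ (mul_pos hqm (by linarith : (0:ℚ) < (q : ℚ) - 1))]
  have expand : ((s : ℚ) - ((n : ℚ) - s) / ((q : ℚ) - 1)
      + ((n : ℚ) - s) / ((q : ℚ) ^ (k - l - 1) * ((q : ℚ) - 1))) * ((q : ℚ) ^ m * ((q : ℚ) - 1))
      = (q : ℚ) ^ m * ((q : ℚ) - 1) * s - ((n : ℚ) - s) * (q : ℚ) ^ m + ((n : ℚ) - s) := by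
    have h1 : ((q : ℚ) - 1) ≠ 0 := by linarith
    have h2 : (q : ℚ) ^ m ≠ 0 := ne_of_gt hqm
    field_simp
    ring
  rw [expand]
  have k2 : ((q : ℚ) - 1) * ((A : ℚ) * s - B * n) ≤ ((q : ℚ) - 1) * ((q : ℚ) ^ m * a) :=
    mul_le_mul_of_nonneg_left k1 (by linarith)
  have e1 : (q : ℚ) ^ m * ((q : ℚ) - 1) * s - ((n : ℚ) - s) * (q : ℚ) ^ m + ((n : ℚ) - s)
      = ((q : ℚ) - 1) * ((A : ℚ) * s - B * n) := by
    rw [hABq]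
    linear_combination ((n : ℚ) - s) * hBq
  rw [e1]
  calc ((q : ℚ) - 1) * ((A : ℚ) * s - B * n) ≤ ((q : ℚ) - 1) * ((q : ℚ) ^ m * a) := k2
    _ = (a : ℚ) * ((q : ℚ) ^ m * ((q : ℚ) - 1)) := by ring
end
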